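/- In the coordinate Hopf superalgebra of GL(1|1) with generators c_{11}, c_{22} (even, invertible) and c_{12}, c_{21} (odd), the comultiplication satisfies Δ(c^λ c_{21} c_{12}) = c^{λ+ε_1} c_{21} ⊗ c^{λ+ε_1} c_{12} − c^{λ+ε_2} c_{12} ⊗ c^{λ+ε_2} c_{21} + c^λ c_{21} c_{12} ⊗ c^{λ+ε_1+ε_2} + c^{λ+ε_1+ε_2} ⊗ c^λ c_{21} c_{12} + (λ_1 − λ_2) c^λ c_{21} c_{12} ⊗ c^λ c_{21} c_{12}, where c^λ = c_{11}^{λ_1} c_{22}^{λ_2}. -/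

import Mathlib

section helpers
variable {A B : Type*} [Ring A] [Ring B]

lemma zpow_unit_plus_nil (D W : Bˣ) (N : B)
    (hW : (W : B) = D + N) (hN2 : N * N = 0) (hc : (D : B) * N = N * D) :
    ∀ n : ℤ, ((W ^ n : Bˣ) : B) = ((D ^ n : Bˣ) : B) + n • (((D ^ (n-1) : Bˣ) : B) * N) := by
  have hDD : ∀ n : ℤ, ((D ^ (n-1) : Bˣ) : B) * (D : B) = ((D ^ n : Bˣ) : B) := by
    intro n
    rw [← Units.val_mul, ← zpow_add_one, sub_add_cancel]
  have step : ∀ n : ℤ,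
      (((D ^ n : Bˣ) : B) + n • (((D ^ (n-1) : Bˣ) : B) * N)) * (W : B) =
      ((D ^ (n+1) : Bˣ) : B) + (n+1) • (((D ^ n : Bˣ) : B) * N) := by
    intro n
    rw [hW]
    rw [add_mul, mul_add, mul_add, smul_mul_assoc, smul_mul_assoc]
    rw [mul_assoc, hc.symm, ← mul_assoc, hDD, mul_assoc, hN2, mul_zero, smul_zero,
      add_zero, ← Units.val_mul, ← zpow_add_one, add_smul, one_smul]
    abel
  intro n
  induction n using Int.induction_on with
  | zero => simp
  | succ k ih =>
      have h1 : ((W ^ ((k:ℤ)+1) : Bˣ) : B) = ((W ^ (k:ℤ) : Bˣ) : B) * (W : B) := by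
        rw [← Units.val_mul, ← zpow_add_one]
      rw [h1, ih, step, add_sub_cancel_right]
  | pred k ih =>
      have h1 : ((W ^ (-(k:ℤ)-1) : Bˣ) : B) * (W : B) = ((W ^ (-(k:ℤ)) : Bˣ) : B) := by
        rw [← Units.val_mul, ← zpow_add_one, sub_add_cancel]
      have h2 := step (-(k:ℤ)-1)
      rw [sub_add_cancel, ← ih, ← h1] at h2
      exact (W.isUnit.mul_right_cancel h2.symm)

lemma map_units_zpow (f : A →+* B) (u : Aˣ) (n : ℤ) :
    f ((u ^ n : Aˣ) : A) = ((Units.map (f : A →* B) u ^ n : Bˣ) : B) := by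
  rw [← map_zpow (Units.map (f : A →* B)) u n, Units.coe_map]
  rfl

lemma hom_comm (f : A →+* B) {x y : A} (h : x * y = y * x) : f x * f y = f y * f x := by
  rw [← map_mul, h, map_mul]

lemma hom_anti (f : A →+* B) {x y : A} (h : x * y = -(y * x)) :
    f x * f y = -(f y * f x) := by
  rw [← map_mul, h, map_neg, map_mul]

lemma hom_merge (f : A →+* B) {x y z : A} (h : x * y = z) : f x * f y = f z := by
  rw [← map_mul, h]

lemma hom_sq_zero (f : A →+* B) {x : A} (h : x * x = 0) : f x * f x = 0 := by
  rw [← map_mul, h, map_zero]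

end helpers

set_option maxHeartbeats 4000000 in
/-- The comultiplication formula for `c^λ c₂₁ c₁₂` in `K[GL(1|1)]`.  The coordinate
superalgebra `A` has even invertible generators `c₁₁ = ↑u11`, `c₂₂ = ↑u22` and odd
generators `c₁₂, c₂₁` (squaring to zero and anticommuting, the even generators being
central among the generators).  The super tensor product `A ⊗ A` is modelled by an
algebra `B` together with ring homomorphisms `L : a ↦ a⊗1` and `R : b ↦ 1⊗b`
satisfying the Koszul sign rule `(1⊗b)(c⊗1) = (-1)^{|b||c|} c⊗b`, and
`Δ : A → B` is the ring homomorphism with `Δ(c_{ij}) = ∑_k c_{ik} ⊗ c_{kj}`.  Then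
`Δ(c^λ c₂₁ c₁₂) = c^{λ+ε₁}c₂₁ ⊗ c^{λ+ε₁}c₁₂ − c^{λ+ε₂}c₁₂ ⊗ c^{λ+ε₂}c₂₁
 + c^λc₂₁c₁₂ ⊗ c^{λ+ε₁+ε₂} + c^{λ+ε₁+ε₂} ⊗ c^λc₂₁c₁₂
 + (λ₁−λ₂) c^λc₂₁c₁₂ ⊗ c^λc₂₁c₁₂`. -/
theorem comul_formula_gl11 (A B : Type*) [Ring A] [Ring B]
    (u11 u22 : Aˣ) (c12 c21 : A)
    -- relations in K[GL(1|1)]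
    (h12sq : c12 * c12 = 0) (h21sq : c21 * c21 = 0)
    (hanti : c12 * c21 = -(c21 * c12))
    (h1112 : (u11 : A) * c12 = c12 * u11) (h1121 : (u11 : A) * c21 = c21 * u11)
    (h2212 : (u22 : A) * c12 = c12 * u22) (h2221 : (u22 : A) * c21 = c21 * u22)
    (huu : (u11 : A) * u22 = (u22 : A) * u11)
    -- the super tensor product and the comultiplication
    (Δ L R : A →+* B)
    (s1 : R c12 * L c12 = -(L c12 * R c12)) (s2 : R c12 * L c21 = -(L c21 * R c12))
    (s3 : R c21 * L c12 = -(L c12 * R c21)) (s4 : R c21 * L c21 = -(L c21 * R c21))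
    (e1 : ∀ a : A, R a * L (u11 : A) = L (u11 : A) * R a)
    (e2 : ∀ a : A, R a * L (u22 : A) = L (u22 : A) * R a)
    (e3 : ∀ a : A, R (u11 : A) * L a = L a * R (u11 : A))
    (e4 : ∀ a : A, R (u22 : A) * L a = L a * R (u22 : A))
    (d11 : Δ (u11 : A) = L (u11 : A) * R (u11 : A) + L c12 * R c21)
    (d12 : Δ c12 = L (u11 : A) * R c12 + L c12 * R (u22 : A))
    (d21 : Δ c21 = L c21 * R (u11 : A) + L (u22 : A) * R c21)
    (d22 : Δ (u22 : A) = L c21 * R c12 + L (u22 : A) * R (u22 : A)) :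
    ∀ lam : ℤ × ℤ,
      Δ (((u11 ^ lam.1 * u22 ^ lam.2 : Aˣ) : A) * c21 * c12) =
        L (((u11 ^ (lam.1 + 1) * u22 ^ lam.2 : Aˣ) : A) * c21) *
            R (((u11 ^ (lam.1 + 1) * u22 ^ lam.2 : Aˣ) : A) * c12)
          - L (((u11 ^ lam.1 * u22 ^ (lam.2 + 1) : Aˣ) : A) * c12) *
              R (((u11 ^ lam.1 * u22 ^ (lam.2 + 1) : Aˣ) : A) * c21)
          + L (((u11 ^ lam.1 * u22 ^ lam.2 : Aˣ) : A) * c21 * c12) *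
              R ((u11 ^ (lam.1 + 1) * u22 ^ (lam.2 + 1) : Aˣ) : A)
          + L ((u11 ^ (lam.1 + 1) * u22 ^ (lam.2 + 1) : Aˣ) : A) *
              R (((u11 ^ lam.1 * u22 ^ lam.2 : Aˣ) : A) * c21 * c12)
          + (lam.1 - lam.2) •
              (L (((u11 ^ lam.1 * u22 ^ lam.2 : Aˣ) : A) * c21 * c12) *
                R (((u11 ^ lam.1 * u22 ^ lam.2 : Aˣ) : A) * c21 * c12)) := by
  -- A-level commutation, zpow versions
  have z1121 : ∀ n : ℤ, Commute ((u11 ^ n : Aˣ) : A) c21 :=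
    fun n => Commute.units_zpow_left (h1121 : Commute ((u11 : Aˣ) : A) c21) n
  have z1112 : ∀ n : ℤ, Commute ((u11 ^ n : Aˣ) : A) c12 :=
    fun n => Commute.units_zpow_left (h1112 : Commute ((u11 : Aˣ) : A) c12) n
  have z2221 : ∀ n : ℤ, Commute ((u22 ^ n : Aˣ) : A) c21 :=
    fun n => Commute.units_zpow_left (h2221 : Commute ((u22 : Aˣ) : A) c21) n
  have z2212 : ∀ n : ℤ, Commute ((u22 ^ n : Aˣ) : A) c12 :=
    fun n => Commute.units_zpow_left (h2212 : Commute ((u22 : Aˣ) : A) c12) n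
  have zuu : ∀ n m : ℤ, Commute ((u11 ^ n : Aˣ) : A) ((u22 ^ m : Aˣ) : A) :=
    fun n m => Commute.units_zpow_right
      (Commute.units_zpow_left (huu : Commute ((u11 : Aˣ) : A) ((u22 : Aˣ) : A)) n) m
  -- comultiplication of zpowers of u11
  have hA1 : ∀ n : ℤ, Δ ((u11 ^ n : Aˣ) : A) =
      L ((u11 ^ n : Aˣ) : A) * R ((u11 ^ n : Aˣ) : A) +
      n • (L ((u11 ^ (n-1) : Aˣ) : A) * R ((u11 ^ (n-1) : Aˣ) : A) * (L c12 * R c21)) := by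
    have hcU : Commute (Units.map (L : A →* B) u11) (Units.map (R : A →* B) u11) :=
      Units.ext ((e3 ((u11 : Aˣ) : A)).symm)
    have hval : ∀ n : ℤ,
        (((Units.map (L : A →* B) u11 * Units.map (R : A →* B) u11) ^ n : Bˣ) : B) =
        L ((u11 ^ n : Aˣ) : A) * R ((u11 ^ n : Aˣ) : A) := by
      intro n
      rw [hcU.mul_zpow, Units.val_mul, ← map_units_zpow, ← map_units_zpow]
    have hN2 : (L c12 * R c21) * (L c12 * R c21) = 0 := by
      have h0 : L c12 * L c12 = 0 := hom_sq_zero L h12sq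
      rw [mul_assoc, ← mul_assoc (R c21), s3, neg_mul, mul_neg, ← mul_assoc, ← mul_assoc,
        h0, zero_mul, zero_mul, neg_zero]
    have hc : Commute ((L : A →+* B) ((u11 : Aˣ) : A) * R ((u11 : Aˣ) : A)) (L c12 * R c21) :=
      Commute.mul_left (Commute.mul_right (hom_comm L h1112) ((e1 c21).symm))
        (Commute.mul_right (e3 c12) (hom_comm R h1121))
    have hW : ((Units.map (Δ : A →* B) u11 : Bˣ) : B) =
        ((Units.map (L : A →* B) u11 * Units.map (R : A →* B) u11 : Bˣ) : B) +
        (L c12 * R c21) := by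
      rw [Units.val_mul]; exact d11
    have base := zpow_unit_plus_nil
      (Units.map (L : A →* B) u11 * Units.map (R : A →* B) u11)
      (Units.map (Δ : A →* B) u11) (L c12 * R c21) hW hN2 (by rw [Units.val_mul]; exact hc.eq)
    intro n
    rw [map_units_zpow, base n, hval n, hval (n-1)]

  -- comultiplication of zpowers of u22
  have hA2 : ∀ n : ℤ, Δ ((u22 ^ n : Aˣ) : A) =
      L ((u22 ^ n : Aˣ) : A) * R ((u22 ^ n : Aˣ) : A) +
      n • (L ((u22 ^ (n-1) : Aˣ) : A) * R ((u22 ^ (n-1) : Aˣ) : A) * (L c21 * R c12)) := by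
    have hcU : Commute (Units.map (L : A →* B) u22) (Units.map (R : A →* B) u22) :=
      Units.ext ((e4 ((u22 : Aˣ) : A)).symm)
    have hval : ∀ n : ℤ,
        (((Units.map (L : A →* B) u22 * Units.map (R : A →* B) u22) ^ n : Bˣ) : B) =
        L ((u22 ^ n : Aˣ) : A) * R ((u22 ^ n : Aˣ) : A) := by
      intro n
      rw [hcU.mul_zpow, Units.val_mul, ← map_units_zpow, ← map_units_zpow]
    have hN2 : (L c21 * R c12) * (L c21 * R c12) = 0 := by
      have h0 : L c21 * L c21 = 0 := hom_sq_zero L h21sq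
      rw [mul_assoc, ← mul_assoc (R c12), s2, neg_mul, mul_neg, ← mul_assoc, ← mul_assoc,
        h0, zero_mul, zero_mul, neg_zero]
    have hc : Commute ((L : A →+* B) ((u22 : Aˣ) : A) * R ((u22 : Aˣ) : A)) (L c21 * R c12) :=
      Commute.mul_left (Commute.mul_right (hom_comm L h2221) ((e2 c12).symm))
        (Commute.mul_right (e4 c21) (hom_comm R h2212))
    have hW : ((Units.map (Δ : A →* B) u22 : Bˣ) : B) =
        ((Units.map (L : A →* B) u22 * Units.map (R : A →* B) u22 : Bˣ) : B) +
        (L c21 * R c12) := by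
      rw [Units.val_mul]; exact d22.trans (add_comm _ _)
    have base := zpow_unit_plus_nil
      (Units.map (L : A →* B) u22 * Units.map (R : A →* B) u22)
      (Units.map (Δ : A →* B) u22) (L c21 * R c12) hW hN2 (by rw [Units.val_mul]; exact hc.eq)
    intro n
    rw [map_units_zpow, base n, hval n, hval (n-1)]
  -- casts of the bare generators
  have k1 : ((u11 : Aˣ) : A) = ((u11 ^ (1:ℤ) : Aˣ) : A) := by rw [zpow_one]
  have k2 : ((u22 : Aˣ) : A) = ((u22 ^ (1:ℤ) : Aˣ) : A) := by rw [zpow_one]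
  -- cross swap rules: R-factors move right past L-factors
  have w1 : ∀ (x : A) (n : ℤ), R x * L ((u11 ^ n : Aˣ) : A) = L ((u11 ^ n : Aˣ) : A) * R x := by
    intro x n
    have h : Commute (R x) ((Units.map (L : A →* B) u11 : Bˣ) : B) := e1 x
    have h2 := (h.units_zpow_right n).eq
    rwa [← map_units_zpow] at h2
  have w2 : ∀ (x : A) (n : ℤ), R x * L ((u22 ^ n : Aˣ) : A) = L ((u22 ^ n : Aˣ) : A) * R x := by
    intro x n
    have h : Commute (R x) ((Units.map (L : A →* B) u22 : Bˣ) : B) := e2 x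
    have h2 := (h.units_zpow_right n).eq
    rwa [← map_units_zpow] at h2
  have w3 : ∀ (x : A) (n : ℤ), R ((u11 ^ n : Aˣ) : A) * L x = L x * R ((u11 ^ n : Aˣ) : A) := by
    intro x n
    have h : Commute ((Units.map (R : A →* B) u11 : Bˣ) : B) (L x) := e3 x
    have h2 := (h.units_zpow_left n).eq
    rwa [← map_units_zpow] at h2
  have w4 : ∀ (x : A) (n : ℤ), R ((u22 ^ n : Aˣ) : A) * L x = L x * R ((u22 ^ n : Aˣ) : A) := by
    intro x n
    have h : Commute ((Units.map (R : A →* B) u22 : Bˣ) : B) (L x) := e4 x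
    have h2 := (h.units_zpow_left n).eq
    rwa [← map_units_zpow] at h2
  have w1' : ∀ (x : A) (n : ℤ) (w : B),
      R x * (L ((u11 ^ n : Aˣ) : A) * w) = L ((u11 ^ n : Aˣ) : A) * (R x * w) :=
    fun x n w => by rw [← mul_assoc, w1, mul_assoc]
  have w2' : ∀ (x : A) (n : ℤ) (w : B),
      R x * (L ((u22 ^ n : Aˣ) : A) * w) = L ((u22 ^ n : Aˣ) : A) * (R x * w) :=
    fun x n w => by rw [← mul_assoc, w2, mul_assoc]
  have w3' : ∀ (x : A) (n : ℤ) (w : B),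
      R ((u11 ^ n : Aˣ) : A) * (L x * w) = L x * (R ((u11 ^ n : Aˣ) : A) * w) :=
    fun x n w => by rw [← mul_assoc, w3, mul_assoc]
  have w4' : ∀ (x : A) (n : ℤ) (w : B),
      R ((u22 ^ n : Aˣ) : A) * (L x * w) = L x * (R ((u22 ^ n : Aˣ) : A) * w) :=
    fun x n w => by rw [← mul_assoc, w4, mul_assoc]
  have s1' : ∀ w : B, R c12 * (L c12 * w) = -(L c12 * (R c12 * w)) :=
    fun w => by rw [← mul_assoc, s1, neg_mul, mul_assoc]
  have s2' : ∀ w : B, R c12 * (L c21 * w) = -(L c21 * (R c12 * w)) :=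
    fun w => by rw [← mul_assoc, s2, neg_mul, mul_assoc]
  have s3' : ∀ w : B, R c21 * (L c12 * w) = -(L c12 * (R c21 * w)) :=
    fun w => by rw [← mul_assoc, s3, neg_mul, mul_assoc]
  have s4' : ∀ w : B, R c21 * (L c21 * w) = -(L c21 * (R c21 * w)) :=
    fun w => by rw [← mul_assoc, s4, neg_mul, mul_assoc]
  -- sorting of L-factors
  have l1 : ∀ n : ℤ, L c21 * L ((u11 ^ n : Aˣ) : A) = L ((u11 ^ n : Aˣ) : A) * L c21 :=
    fun n => hom_comm L ((z1121 n).symm.eq)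
  have l2 : ∀ n : ℤ, L c21 * L ((u22 ^ n : Aˣ) : A) = L ((u22 ^ n : Aˣ) : A) * L c21 :=
    fun n => hom_comm L ((z2221 n).symm.eq)
  have l3 : ∀ n : ℤ, L c12 * L ((u11 ^ n : Aˣ) : A) = L ((u11 ^ n : Aˣ) : A) * L c12 :=
    fun n => hom_comm L ((z1112 n).symm.eq)
  have l4 : ∀ n : ℤ, L c12 * L ((u22 ^ n : Aˣ) : A) = L ((u22 ^ n : Aˣ) : A) * L c12 :=
    fun n => hom_comm L ((z2212 n).symm.eq)
  have l5 : L c12 * L c21 = -(L c21 * L c12) := hom_anti L hanti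
  have l6 : ∀ n m : ℤ, L ((u22 ^ n : Aˣ) : A) * L ((u11 ^ m : Aˣ) : A) =
      L ((u11 ^ m : Aˣ) : A) * L ((u22 ^ n : Aˣ) : A) :=
    fun n m => hom_comm L ((zuu m n).symm.eq)
  have lm1 : ∀ n m : ℤ, L ((u11 ^ n : Aˣ) : A) * L ((u11 ^ m : Aˣ) : A) =
      L ((u11 ^ (n+m) : Aˣ) : A) :=
    fun n m => hom_merge L (by rw [← Units.val_mul, ← zpow_add])
  have lm2 : ∀ n m : ℤ, L ((u22 ^ n : Aˣ) : A) * L ((u22 ^ m : Aˣ) : A) =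
      L ((u22 ^ (n+m) : Aˣ) : A) :=
    fun n m => hom_merge L (by rw [← Units.val_mul, ← zpow_add])
  have lz1 : L c12 * L c12 = 0 := hom_sq_zero L h12sq
  have lz2 : L c21 * L c21 = 0 := hom_sq_zero L h21sq
  have l1' : ∀ (n : ℤ) (w : B), L c21 * (L ((u11 ^ n : Aˣ) : A) * w) =
      L ((u11 ^ n : Aˣ) : A) * (L c21 * w) := fun n w => by rw [← mul_assoc, l1, mul_assoc]
  have l2' : ∀ (n : ℤ) (w : B), L c21 * (L ((u22 ^ n : Aˣ) : A) * w) =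
      L ((u22 ^ n : Aˣ) : A) * (L c21 * w) := fun n w => by rw [← mul_assoc, l2, mul_assoc]
  have l3' : ∀ (n : ℤ) (w : B), L c12 * (L ((u11 ^ n : Aˣ) : A) * w) =
      L ((u11 ^ n : Aˣ) : A) * (L c12 * w) := fun n w => by rw [← mul_assoc, l3, mul_assoc]
  have l4' : ∀ (n : ℤ) (w : B), L c12 * (L ((u22 ^ n : Aˣ) : A) * w) =
      L ((u22 ^ n : Aˣ) : A) * (L c12 * w) := fun n w => by rw [← mul_assoc, l4, mul_assoc]
  have l5' : ∀ w : B, L c12 * (L c21 * w) = -(L c21 * (L c12 * w)) :=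
    fun w => by rw [← mul_assoc, l5, neg_mul, mul_assoc]
  have l6' : ∀ (n m : ℤ) (w : B), L ((u22 ^ n : Aˣ) : A) * (L ((u11 ^ m : Aˣ) : A) * w) =
      L ((u11 ^ m : Aˣ) : A) * (L ((u22 ^ n : Aˣ) : A) * w) :=
    fun n m w => by rw [← mul_assoc, l6, mul_assoc]
  have lm1' : ∀ (n m : ℤ) (w : B), L ((u11 ^ n : Aˣ) : A) * (L ((u11 ^ m : Aˣ) : A) * w) =
      L ((u11 ^ (n+m) : Aˣ) : A) * w := fun n m w => by rw [← mul_assoc, lm1]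
  have lm2' : ∀ (n m : ℤ) (w : B), L ((u22 ^ n : Aˣ) : A) * (L ((u22 ^ m : Aˣ) : A) * w) =
      L ((u22 ^ (n+m) : Aˣ) : A) * w := fun n m w => by rw [← mul_assoc, lm2]
  have lz1' : ∀ w : B, L c12 * (L c12 * w) = 0 := fun w => by rw [← mul_assoc, lz1, zero_mul]
  have lz2' : ∀ w : B, L c21 * (L c21 * w) = 0 := fun w => by rw [← mul_assoc, lz2, zero_mul]
  -- sorting of R-factors
  have r1 : ∀ n : ℤ, R c21 * R ((u11 ^ n : Aˣ) : A) = R ((u11 ^ n : Aˣ) : A) * R c21 :=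
    fun n => hom_comm R ((z1121 n).symm.eq)
  have r2 : ∀ n : ℤ, R c21 * R ((u22 ^ n : Aˣ) : A) = R ((u22 ^ n : Aˣ) : A) * R c21 :=
    fun n => hom_comm R ((z2221 n).symm.eq)
  have r3 : ∀ n : ℤ, R c12 * R ((u11 ^ n : Aˣ) : A) = R ((u11 ^ n : Aˣ) : A) * R c12 :=
    fun n => hom_comm R ((z1112 n).symm.eq)
  have r4 : ∀ n : ℤ, R c12 * R ((u22 ^ n : Aˣ) : A) = R ((u22 ^ n : Aˣ) : A) * R c12 :=
    fun n => hom_comm R ((z2212 n).symm.eq)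
  have r5 : R c12 * R c21 = -(R c21 * R c12) := hom_anti R hanti
  have r6 : ∀ n m : ℤ, R ((u22 ^ n : Aˣ) : A) * R ((u11 ^ m : Aˣ) : A) =
      R ((u11 ^ m : Aˣ) : A) * R ((u22 ^ n : Aˣ) : A) :=
    fun n m => hom_comm R ((zuu m n).symm.eq)
  have rm1 : ∀ n m : ℤ, R ((u11 ^ n : Aˣ) : A) * R ((u11 ^ m : Aˣ) : A) =
      R ((u11 ^ (n+m) : Aˣ) : A) :=
    fun n m => hom_merge R (by rw [← Units.val_mul, ← zpow_add])
  have rm2 : ∀ n m : ℤ, R ((u22 ^ n : Aˣ) : A) * R ((u22 ^ m : Aˣ) : A) =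
      R ((u22 ^ (n+m) : Aˣ) : A) :=
    fun n m => hom_merge R (by rw [← Units.val_mul, ← zpow_add])
  have rz1 : R c12 * R c12 = 0 := hom_sq_zero R h12sq
  have rz2 : R c21 * R c21 = 0 := hom_sq_zero R h21sq
  have r1' : ∀ (n : ℤ) (w : B), R c21 * (R ((u11 ^ n : Aˣ) : A) * w) =
      R ((u11 ^ n : Aˣ) : A) * (R c21 * w) := fun n w => by rw [← mul_assoc, r1, mul_assoc]
  have r2' : ∀ (n : ℤ) (w : B), R c21 * (R ((u22 ^ n : Aˣ) : A) * w) =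
      R ((u22 ^ n : Aˣ) : A) * (R c21 * w) := fun n w => by rw [← mul_assoc, r2, mul_assoc]
  have r3' : ∀ (n : ℤ) (w : B), R c12 * (R ((u11 ^ n : Aˣ) : A) * w) =
      R ((u11 ^ n : Aˣ) : A) * (R c12 * w) := fun n w => by rw [← mul_assoc, r3, mul_assoc]
  have r4' : ∀ (n : ℤ) (w : B), R c12 * (R ((u22 ^ n : Aˣ) : A) * w) =
      R ((u22 ^ n : Aˣ) : A) * (R c12 * w) := fun n w => by rw [← mul_assoc, r4, mul_assoc]
  have r5' : ∀ w : B, R c12 * (R c21 * w) = -(R c21 * (R c12 * w)) :=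
    fun w => by rw [← mul_assoc, r5, neg_mul, mul_assoc]
  have r6' : ∀ (n m : ℤ) (w : B), R ((u22 ^ n : Aˣ) : A) * (R ((u11 ^ m : Aˣ) : A) * w) =
      R ((u11 ^ m : Aˣ) : A) * (R ((u22 ^ n : Aˣ) : A) * w) :=
    fun n m w => by rw [← mul_assoc, r6, mul_assoc]
  have rm1' : ∀ (n m : ℤ) (w : B), R ((u11 ^ n : Aˣ) : A) * (R ((u11 ^ m : Aˣ) : A) * w) =
      R ((u11 ^ (n+m) : Aˣ) : A) * w := fun n m w => by rw [← mul_assoc, rm1]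
  have rm2' : ∀ (n m : ℤ) (w : B), R ((u22 ^ n : Aˣ) : A) * (R ((u22 ^ m : Aˣ) : A) * w) =
      R ((u22 ^ (n+m) : Aˣ) : A) * w := fun n m w => by rw [← mul_assoc, rm2]
  have rz1' : ∀ w : B, R c12 * (R c12 * w) = 0 := fun w => by rw [← mul_assoc, rz1, zero_mul]
  have rz2' : ∀ w : B, R c21 * (R c21 * w) = 0 := fun w => by rw [← mul_assoc, rz2, zero_mul]
  -- the main computation
  intro lam
  have expand : Δ (((u11 ^ lam.1 * u22 ^ lam.2 : Aˣ) : A) * c21 * c12) =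
      Δ ((u11 ^ lam.1 : Aˣ) : A) * Δ ((u22 ^ lam.2 : Aˣ) : A) * Δ c21 * Δ c12 := by
    rw [map_mul, map_mul, Units.val_mul, map_mul]
  rw [expand, hA1 lam.1, hA2 lam.2, d21, d12, k1, k2]
  simp only [Units.val_mul, map_mul, mul_add, add_mul, smul_mul_assoc, mul_smul_comm,
    sub_smul, smul_neg, smul_zero, neg_mul, mul_neg, neg_neg, mul_zero, zero_mul,
    add_zero, zero_add, neg_zero, mul_assoc, sub_add_cancel,
    w1, w1', w2, w2', w3, w3', w4, w4', s1, s1', s2, s2', s3, s3', s4, s4',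
    l1, l1', l2, l2', l3, l3', l4, l4', l5, l5', l6, l6', lm1, lm1', lm2, lm2',
    lz1, lz1', lz2, lz2',
    r1, r1', r2, r2', r3, r3', r4, r4', r5, r5', r6, r6', rm1, rm1', rm2, rm2',
    rz1, rz1', rz2, rz2']
  abel
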